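/- Let T be a positively edge-weighted tree with m vertices and let Ψ = Ψ_v be its square root embedding into ℝ^{m-1}. For any subset L of the vertices of T with |L| = n ≥ 1, the affine span of Ψ(L) has dimension exactly n - 1. Equivalently, the points of Ψ(L) are affinely independent. -/

import Mathlib

open SimpleGraph

/-- The unique path between two vertices of a tree, as a walk. -/
noncomputable def treePath {V : Type*} (G : SimpleGraph V) (hG : G.IsTree) (a b : V) :
    G.Walk a b :=
  (hG.existsUnique_path a b).choose

/-- The square root embedding with base node `v`: the coordinate of `Ψ_v u` at edge `e`
is `√(w e)` if `e` lies on the path from `v` to `u`, and `0` otherwise. -/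
noncomputable def sqrtEmbed {V : Type*} [DecidableEq V] (G : SimpleGraph V) (hG : G.IsTree)
    [Fintype G.edgeSet] (w : Sym2 V → ℝ) (v u : V) : EuclideanSpace ℝ G.edgeSet :=
  WithLp.toLp 2 (fun e : G.edgeSet => if (e : Sym2 V) ∈ (treePath G hG v u).edges then Real.sqrt (w e) else 0)

/-- The tree metric: sum of the weights of the edges on the unique path. -/
noncomputable def treeDist {V : Type*} (G : SimpleGraph V) (hG : G.IsTree)
    (w : Sym2 V → ℝ) (a b : V) : ℝ :=
  ((treePath G hG a b).edges.map w).sum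

lemma treePath_isPath {V : Type*} (G : SimpleGraph V) (hG : G.IsTree) (a b : V) :
    (treePath G hG a b).IsPath :=
  (hG.existsUnique_path a b).choose_spec.1

lemma treePath_unique {V : Type*} {G : SimpleGraph V} (hG : G.IsTree) {a b : V}
    (p : G.Walk a b) (hp : p.IsPath) : p = treePath G hG a b :=
  (hG.existsUnique_path a b).choose_spec.2 p hp

/-- If `u` lies on the tree path from `v` to `u'`, then the path to `u` is no longer than the
path to `u'`, and if the lengths agree then `u' = u`. -/
lemma treePath_len_le {V : Type*} [DecidableEq V] {G : SimpleGraph V} (hG : G.IsTree) {v u u' : V}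
    (hu : u ∈ (treePath G hG v u').support) :
    (treePath G hG v u).length ≤ (treePath G hG v u').length ∧
      ((treePath G hG v u').length ≤ (treePath G hG v u).length → u' = u) := by
  set p' := treePath G hG v u' with hp'
  have hq : ((p'.takeUntil u hu)).IsPath := (treePath_isPath G hG v u').takeUntil hu
  have hqe : p'.takeUntil u hu = treePath G hG v u := treePath_unique hG _ hq
  have hsplit := p'.take_spec hu
  have hlen : (p'.takeUntil u hu).length + (p'.dropUntil u hu).length = p'.length := by
    rw [← SimpleGraph.Walk.length_append, hsplit]
  constructor
  · rw [← hqe]; exact p'.length_takeUntil_le hu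
  · intro hle
    rw [← hqe] at hle
    have h0 : (p'.dropUntil u hu).length = 0 := by omega
    exact (SimpleGraph.Walk.eq_of_length_eq_zero h0).symm

/-- Core lemma: the square-root embedded vectors of a finite set of vertices not containing the
base vertex `v` admit no nontrivial linear relation. -/
lemma sqrtEmbed_key {V : Type*} [DecidableEq V] (G : SimpleGraph V) (hG : G.IsTree)
    [Fintype G.edgeSet] (w : Sym2 V → ℝ) (hw : ∀ e ∈ G.edgeSet, 0 < w e) (v : V) :
    ∀ (M : Finset V), v ∉ M → ∀ (c : V → ℝ),
      ∑ u ∈ M, c u • sqrtEmbed G hG w v u = 0 → ∀ u ∈ M, c u = 0 := by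
  intro M
  induction M using Finset.strongInduction with
  | _ M ih =>
    intro hv c hsum u hu
    obtain ⟨u₀, hu₀, hmax⟩ := M.exists_max_image (fun x => (treePath G hG v x).length) ⟨u, hu⟩
    -- find the last edge of the path from v to u₀
    have hvne : v ≠ u₀ := fun h => hv (h ▸ hu₀)
    set p := treePath G hG v u₀ with hp
    have hnn : ¬ p.reverse.Nil := by
      rw [SimpleGraph.Walk.nil_iff_length_eq, SimpleGraph.Walk.length_reverse]
      intro h0
      exact hvne (SimpleGraph.Walk.eq_of_length_eq_zero h0)
    obtain ⟨x, hadj, q, hrev⟩ := SimpleGraph.Walk.not_nil_iff.mp hnn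
    have he0 : s(u₀, x) ∈ p.edges := by
      have : s(u₀, x) ∈ p.reverse.edges := by rw [hrev]; simp
      rwa [SimpleGraph.Walk.edges_reverse, List.mem_reverse] at this
    have heG : s(u₀, x) ∈ G.edgeSet := p.edges_subset_edgeSet he0
    set E : G.edgeSet := ⟨s(u₀, x), heG⟩ with hE
    -- evaluate the linear relation at coordinate E
    have h1 : ∑ u' ∈ M, c u' * (sqrtEmbed G hG w v u' E) = 0 := by
      have h := congrArg (EuclideanSpace.proj E) hsum
      rw [map_sum, map_zero] at h
      simpa only [map_smul, smul_eq_mul, PiLp.proj_apply] using h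
    have h2 : ∑ u' ∈ M, c u' * (sqrtEmbed G hG w v u' E) = c u₀ * Real.sqrt (w s(u₀, x)) := by
      rw [Finset.sum_eq_single_of_mem u₀ hu₀]
      · rw [sqrtEmbed, hE]
        simp [← hp, he0]
      · intro u' hu' hne
        rw [sqrtEmbed, hE]
        simp only
        rw [if_neg, mul_zero]
        intro hmem
        have hsup : u₀ ∈ (treePath G hG v u').support :=
          SimpleGraph.Walk.fst_mem_support_of_mem_edges _ hmem
        have hle := treePath_len_le hG hsup
        exact hne (hle.2 (hmax u' hu'))
    have hsq : (0:ℝ) < Real.sqrt (w s(u₀, x)) := Real.sqrt_pos.mpr (hw _ heG)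
    have hc0 : c u₀ = 0 := by
      have := h1.symm.trans h2
      nlinarith [hsq]
    -- remove u₀ and recurse
    rcases eq_or_ne u u₀ with rfl | hne
    · exact hc0
    · have hsub : M.erase u₀ ⊂ M := Finset.erase_ssubset hu₀
      have hsum' : ∑ u' ∈ M.erase u₀, c u' • sqrtEmbed G hG w v u' = 0 := by
        rw [← Finset.add_sum_erase M (fun u' => c u' • sqrtEmbed G hG w v u') hu₀] at hsum
        simp only [hc0, zero_smul, zero_add] at hsum
        exact hsum
      exact ih _ hsub (fun h => hv (Finset.mem_of_mem_erase h)) c hsum'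
        u (Finset.mem_erase.mpr ⟨hne, hu⟩)

lemma sqrtEmbed_linearIndependent {V : Type*} [DecidableEq V] (G : SimpleGraph V) (hG : G.IsTree)
    [Fintype G.edgeSet] (w : Sym2 V → ℝ) (hw : ∀ e ∈ G.edgeSet, 0 < w e) (v : V)
    (M : Finset V) (hv : v ∉ M) :
    LinearIndependent ℝ (fun u : M => sqrtEmbed G hG w v u) := by
  rw [Fintype.linearIndependent_iff]
  intro g hg i
  set c : V → ℝ := fun u => if h : u ∈ M then g ⟨u, h⟩ else 0 with hc
  have hsum : ∑ u ∈ M, c u • sqrtEmbed G hG w v u = 0 := by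
    rw [← Finset.sum_attach M (fun u => c u • sqrtEmbed G hG w v u), ← hg,
      Finset.univ_eq_attach]
    refine Finset.sum_congr rfl fun j _ => ?_
    simp [hc, j.2]
  have := sqrtEmbed_key G hG w hw v M hv c hsum i i.2
  simpa [hc, i.2] using this

/-- for any nonempty set `L` of `n` vertices, the embedded points `Ψ(L)` are
affinely independent, and their affine span has dimension exactly `n - 1`. -/
theorem sqrtEmbed_affineIndependent {V : Type*} [DecidableEq V] (G : SimpleGraph V)
    (hG : G.IsTree) [Fintype G.edgeSet] (w : Sym2 V → ℝ) (hw : ∀ e ∈ G.edgeSet, 0 < w e)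
    (v : V) (L : Finset V) (hL : L.Nonempty) :
    AffineIndependent ℝ (fun x : L => sqrtEmbed G hG w v x) ∧
    Module.finrank ℝ
      (vectorSpan ℝ (Set.range (fun x : L => sqrtEmbed G hG w v x))) = L.card - 1 := by
  have hvv : sqrtEmbed G hG w v v = 0 := by
    have hnil : treePath G hG v v = SimpleGraph.Walk.nil :=
      SimpleGraph.Walk.isPath_iff_eq_nil.mp (treePath_isPath G hG v v)
    ext e
    simp [sqrtEmbed, hnil]
  set S := insert v L with hS
  have hvS : v ∈ S := Finset.mem_insert_self v L
  set v' : S := ⟨v, hvS⟩ with hv'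
  have hIndS : AffineIndependent ℝ (fun x : S => sqrtEmbed G hG w v x) := by
    rw [affineIndependent_iff_linearIndependent_vsub ℝ _ v']
    set M := S.erase v with hM
    have hvM : v ∉ M := Finset.notMem_erase v S
    have hli := sqrtEmbed_linearIndependent G hG w hw v M hvM
    have finj : Function.Injective
        (fun i : {x : S // x ≠ v'} => (⟨i.1.1, Finset.mem_erase.mpr
          ⟨fun h => i.2 (Subtype.ext h), i.1.2⟩⟩ : M)) := by
      intro a b hab
      simp only [Subtype.mk.injEq] at hab
      exact Subtype.ext (Subtype.ext hab)
    have := hli.comp _ finj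
    convert this using 1
    funext i
    show sqrtEmbed G hG w v i.1.1 -ᵥ sqrtEmbed G hG w v v = _
    rw [hvv]
    simp
    rfl
  have hInd : AffineIndependent ℝ (fun x : L => sqrtEmbed G hG w v x) := by
    have := hIndS.comp_embedding
      ⟨fun x : L => (⟨x.1, Finset.mem_insert_of_mem x.2⟩ : S), by
        intro a b hab
        simp only [Subtype.mk.injEq] at hab
        exact Subtype.ext hab⟩
    convert this using 1
    rfl
  refine ⟨hInd, ?_⟩
  have hcard : Fintype.card L = (L.card - 1) + 1 := by
    rw [Fintype.card_coe]
    have := hL.card_pos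
    omega
  exact hInd.finrank_vectorSpan hcard
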